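/- Fix k with 0 < k < 1 and define, for θ ∈ [0, π − arctan(1/k)], R₃(θ) := √( (k²/(√(1 − k²·sin²θ) − k·cosθ) + k·cosθ)² + k²·sin²θ ); here the denominator √(1 − k²·sin²θ) − k·cosθ is positive for all such θ. Then R₃ is strictly decreasing on [0, π − arctan(1/k)], with R₃(0) = k/(1 − k) and R₃(π − arctan(1/k)) = k/√(1 + k²); in particular, for θ ∈ [0, π/2] one has k/√(1 − k²) ≤ R₃(θ) ≤ k/(1 − k). -/

import Mathlib

open Real Set

private lemma R3aux_inner_nonneg (k : ℝ) (hk0 : 0 < k) (hk1 : k < 1) (θ : ℝ) :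
    (0:ℝ) ≤ 1 - k ^ 2 * Real.sin θ ^ 2 := by
  nlinarith [Real.sin_sq_le_one θ, sq_nonneg k, sq_nonneg (Real.sin θ)]

private lemma R3aux_dpos (k : ℝ) (hk0 : 0 < k) (hk1 : k < 1) (θ : ℝ) :
    0 < Real.sqrt (1 - k ^ 2 * Real.sin θ ^ 2) - k * Real.cos θ := by
  have h1 := R3aux_inner_nonneg k hk0 hk1 θ
  have hs2 : Real.sqrt (1 - k ^ 2 * Real.sin θ ^ 2) ^ 2 = 1 - k ^ 2 * Real.sin θ ^ 2 :=
    Real.sq_sqrt h1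
  have hsn : 0 ≤ Real.sqrt (1 - k ^ 2 * Real.sin θ ^ 2) := Real.sqrt_nonneg _
  nlinarith [Real.sin_sq_add_cos_sq θ,
    sq_nonneg (Real.sqrt (1 - k ^ 2 * Real.sin θ ^ 2) - k * Real.cos θ),
    sq_nonneg (Real.sqrt (1 - k ^ 2 * Real.sin θ ^ 2) + k * Real.cos θ)]

private lemma R3aux_id (k : ℝ) (hk0 : 0 < k) (hk1 : k < 1) (θ : ℝ) :
    Real.sqrt ((k ^ 2 / (Real.sqrt (1 - k ^ 2 * Real.sin θ ^ 2) - k * Real.cos θ)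
          + k * Real.cos θ) ^ 2 + k ^ 2 * Real.sin θ ^ 2)
      = k / (Real.sqrt (1 - k ^ 2 * Real.sin θ ^ 2) - k * Real.cos θ) := by
  have hd := R3aux_dpos k hk0 hk1 θ
  set s := Real.sqrt (1 - k ^ 2 * Real.sin θ ^ 2) with hs
  have h1 := R3aux_inner_nonneg k hk0 hk1 θ
  have hs2 : s ^ 2 = 1 - k ^ 2 * Real.sin θ ^ 2 := Real.sq_sqrt h1
  have hd' : s - k * Real.cos θ ≠ 0 := ne_of_gt hd
  have key : (k ^ 2 / (s - k * Real.cos θ) + k * Real.cos θ) ^ 2 + k ^ 2 * Real.sin θ ^ 2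
      = (k / (s - k * Real.cos θ)) ^ 2 := by
    field_simp
    linear_combination hs2 +
      ((s - k * Real.cos θ) ^ 2 - k ^ 2) * Real.sin_sq_add_cos_sq θ
  rw [key, Real.sqrt_sq (by positivity)]

private lemma R3aux_dmono (k : ℝ) (hk0 : 0 < k) (hk1 : k < 1) {θ₁ θ₂ : ℝ}
    (h1 : θ₁ ∈ Set.Icc 0 Real.pi) (h2 : θ₂ ∈ Set.Icc 0 Real.pi) (hlt : θ₁ < θ₂) :
    Real.sqrt (1 - k ^ 2 * Real.sin θ₁ ^ 2) - k * Real.cos θ₁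
      < Real.sqrt (1 - k ^ 2 * Real.sin θ₂ ^ 2) - k * Real.cos θ₂ := by
  have hd1 := R3aux_dpos k hk0 hk1 θ₁
  have hd2 := R3aux_dpos k hk0 hk1 θ₂
  have hc : Real.cos θ₂ < Real.cos θ₁ := Real.strictAntiOn_cos h1 h2 hlt
  have g1 := R3aux_inner_nonneg k hk0 hk1 θ₁
  have g2 := R3aux_inner_nonneg k hk0 hk1 θ₂
  set s₁ := Real.sqrt (1 - k ^ 2 * Real.sin θ₁ ^ 2)
  set s₂ := Real.sqrt (1 - k ^ 2 * Real.sin θ₂ ^ 2)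
  have hs1 : s₁ ^ 2 = 1 - k ^ 2 * Real.sin θ₁ ^ 2 := Real.sq_sqrt g1
  have hs2 : s₂ ^ 2 = 1 - k ^ 2 * Real.sin θ₂ ^ 2 := Real.sq_sqrt g2
  have hp1 : 0 < s₁ := Real.sqrt_pos.mpr
    (by nlinarith [Real.sin_sq_le_one θ₁, sq_nonneg k, sq_nonneg (Real.sin θ₁)])
  have hp2 : 0 < s₂ := Real.sqrt_pos.mpr
    (by nlinarith [Real.sin_sq_le_one θ₂, sq_nonneg k, sq_nonneg (Real.sin θ₂)])
  have hss : 0 < s₁ + s₂ := by linarith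
  have p1 := Real.sin_sq_add_cos_sq θ₁
  have p2 := Real.sin_sq_add_cos_sq θ₂
  have hpos : 0 < k * (Real.cos θ₁ - Real.cos θ₂) *
      ((s₁ - k * Real.cos θ₁) + (s₂ - k * Real.cos θ₂)) :=
    mul_pos (mul_pos hk0 (sub_pos.mpr hc)) (by linarith)
  nlinarith [hpos, hs1, hs2, p1, p2, hss, mul_pos hss hpos]

/-- Monotonicity and bounds for the radius `R₃(θ)` from the three-spheres construction,
case `θ ∈ [0, π − arctan(1/k)]`. -/
theorem R3_strictAnti_and_bounds (k : ℝ) (hk0 : 0 < k) (hk1 : k < 1)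
    (R₃ : ℝ → ℝ)
    (hR₃ : ∀ θ : ℝ, R₃ θ =
      Real.sqrt ((k ^ 2 / (Real.sqrt (1 - k ^ 2 * Real.sin θ ^ 2) - k * Real.cos θ)
          + k * Real.cos θ) ^ 2 + k ^ 2 * Real.sin θ ^ 2)) :
    (∀ θ ∈ Set.Icc (0 : ℝ) (Real.pi - Real.arctan (1 / k)),
        0 < Real.sqrt (1 - k ^ 2 * Real.sin θ ^ 2) - k * Real.cos θ) ∧
    StrictAntiOn R₃ (Set.Icc (0 : ℝ) (Real.pi - Real.arctan (1 / k))) ∧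
    R₃ 0 = k / (1 - k) ∧
    R₃ (Real.pi - Real.arctan (1 / k)) = k / Real.sqrt (1 + k ^ 2) ∧
    (∀ θ ∈ Set.Icc (0 : ℝ) (Real.pi / 2),
        k / Real.sqrt (1 - k ^ 2) ≤ R₃ θ ∧ R₃ θ ≤ k / (1 - k)) := by
  have hid : ∀ θ : ℝ, R₃ θ = k / (Real.sqrt (1 - k ^ 2 * Real.sin θ ^ 2) - k * Real.cos θ) :=
    fun θ => (hR₃ θ).trans (R3aux_id k hk0 hk1 θ)
  have harct_pos : 0 ≤ Real.arctan (1 / k) := by rw [← Real.arctan_zero]; exact (Real.arctan_strictMono.le_iff_le).mpr (by positivity)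
  have harct_lt : Real.arctan (1 / k) < Real.pi / 2 := Real.arctan_lt_pi_div_two _
  have hsub : Set.Icc (0 : ℝ) (Real.pi - Real.arctan (1 / k)) ⊆ Set.Icc 0 Real.pi :=
    Set.Icc_subset_Icc le_rfl (by linarith)
  have hanti : StrictAntiOn R₃ (Set.Icc (0 : ℝ) (Real.pi - Real.arctan (1 / k))) := by
    intro θ₁ hθ₁ θ₂ hθ₂ hlt
    rw [hid θ₁, hid θ₂]
    exact div_lt_div_of_pos_left hk0 (R3aux_dpos k hk0 hk1 θ₁)
      (R3aux_dmono k hk0 hk1 (hsub hθ₁) (hsub hθ₂) hlt)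
  have hR0 : R₃ 0 = k / (1 - k) := by
    rw [hid 0]
    norm_num
  have hRend : R₃ (Real.pi - Real.arctan (1 / k)) = k / Real.sqrt (1 + k ^ 2) := by
    set u := Real.sqrt (1 + k ^ 2) with hu
    have hu0 : 0 < u := Real.sqrt_pos.mpr (by positivity)
    have hu2 : u ^ 2 = 1 + k ^ 2 := Real.sq_sqrt (by positivity)
    have hcos : Real.cos (Real.arctan (1 / k)) = k / u := by
      rw [Real.cos_arctan]
      rw [show (1 : ℝ) + (1 / k) ^ 2 = (u / k) ^ 2 by field_simp; linarith [hu2]]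
      rw [Real.sqrt_sq (by positivity)]
      field_simp
    have hsin : Real.sin (Real.arctan (1 / k)) = 1 / u := by
      rw [Real.sin_arctan]
      rw [show (1 : ℝ) + (1 / k) ^ 2 = (u / k) ^ 2 by field_simp; linarith [hu2]]
      rw [Real.sqrt_sq (by positivity)]
      field_simp
    rw [hid, Real.sin_pi_sub, Real.cos_pi_sub, hsin, hcos]
    rw [show (1 : ℝ) - k ^ 2 * (1 / u) ^ 2 = (1 / u) ^ 2 by field_simp; linear_combination hu2]
    rw [Real.sqrt_sq (by positivity)]
    rw [show (1 / u - k * -(k / u)) = u by field_simp; linear_combination -hu2]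
  refine ⟨fun θ _ => R3aux_dpos k hk0 hk1 θ, hanti, hR0, hRend, ?_⟩
  intro θ hθ
  have hθ' : θ ∈ Set.Icc (0 : ℝ) (Real.pi - Real.arctan (1 / k)) :=
    ⟨hθ.1, by linarith [hθ.2]⟩
  have hhalf : Real.pi / 2 ∈ Set.Icc (0 : ℝ) (Real.pi - Real.arctan (1 / k)) :=
    ⟨by positivity, by linarith⟩
  have h0 : (0 : ℝ) ∈ Set.Icc (0 : ℝ) (Real.pi - Real.arctan (1 / k)) :=
    ⟨le_rfl, by linarith [Real.pi_pos]⟩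
  have hmono := hanti.antitoneOn
  have hRhalf : R₃ (Real.pi / 2) = k / Real.sqrt (1 - k ^ 2) := by
    rw [hid]
    norm_num
  constructor
  · calc k / Real.sqrt (1 - k ^ 2) = R₃ (Real.pi / 2) := hRhalf.symm
    _ ≤ R₃ θ := hmono hθ' hhalf hθ.2
  · calc R₃ θ ≤ R₃ 0 := hmono h0 hθ' hθ.1
    _ = k / (1 - k) := hR0
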